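/- Let i, j, k, l be integers with gcd(i,j) = 1 and gcd(k,l) = 1. Then the group presented by generators x, y, b, t and relators xy = yx, xb = bx, t(xⁱyʲ)t⁻¹ = xᵏbˡ admits a surjective group homomorphism onto the free group F₂ of rank 2. -/

import Mathlib

/-- Generators `x, y, b, t`. -/
def x5 : FreeGroup (Fin 4) := FreeGroup.of 0
def y5 : FreeGroup (Fin 4) := FreeGroup.of 1
def b5 : FreeGroup (Fin 4) := FreeGroup.of 2
def t5 : FreeGroup (Fin 4) := FreeGroup.of 3

/-- Relators `xy = yx`, `xb = bx`, `t(xⁱyʲ)t⁻¹ = xᵏbˡ`. -/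
def rels5 (i j k l : ℤ) : Set (FreeGroup (Fin 4)) :=
  {x5 * y5 * (y5 * x5)⁻¹, x5 * b5 * (b5 * x5)⁻¹,
    t5 * (x5 ^ i * y5 ^ j) * t5⁻¹ * (x5 ^ k * b5 ^ l)⁻¹}

/-- An instance of Proposition 3.4: a tubular group with maximal edge inclusions whose
graph has a single loop which is not a self loop surjects the free group `F₂`. -/
theorem single_loop_surjects_F2 (i j k l : ℤ)
    (hij : Int.gcd i j = 1) (hkl : Int.gcd k l = 1) :
    ∃ f : PresentedGroup (rels5 i j k l) →* FreeGroup (Fin 2),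
      Function.Surjective f := by
  classical
  set A : FreeGroup (Fin 2) := FreeGroup.of 0 with hA
  set S : FreeGroup (Fin 2) := FreeGroup.of 1 with hS
  -- surjectivity criterion: A and S in range
  have key : ∀ (f : PresentedGroup (rels5 i j k l) →* FreeGroup (Fin 2)),
      A ∈ f.range → S ∈ f.range → Function.Surjective f := by
    intro f hA' hS'
    rw [← MonoidHom.range_eq_top, eq_top_iff,
      ← FreeGroup.closure_range_of (Fin 2), Subgroup.closure_le]
    rintro _ ⟨g, rfl⟩
    fin_cases g
    · exact hA'
    · exact hS'
  by_cases hd : Int.gcd j l = 0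
  · obtain ⟨hj0, hl0⟩ := Int.gcd_eq_zero_iff.mp hd
    subst hj0 hl0
    set φ : Fin 4 → FreeGroup (Fin 2) := ![1, A, 1, S] with hφ
    have h : ∀ r ∈ rels5 i 0 k 0, FreeGroup.lift φ r = 1 := by
      intro r hr
      simp only [rels5, Set.mem_insert_iff, Set.mem_singleton_iff] at hr
      rcases hr with rfl | rfl | rfl <;>
        simp [x5, y5, b5, t5, φ]
    refine ⟨PresentedGroup.toGroup h, key _ ?_ ?_⟩
    · exact ⟨PresentedGroup.of 1, by simp [PresentedGroup.toGroup.of, φ]⟩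
    · exact ⟨PresentedGroup.of 3, by simp [PresentedGroup.toGroup.of, φ]⟩
  · set d : ℤ := (Int.gcd j l : ℤ) with hdd
    have hd0 : d ≠ 0 := Int.natCast_ne_zero.mpr hd
    have hdj : d ∣ j := Int.gcd_dvd_left j l
    have hdl : d ∣ l := Int.gcd_dvd_right j l
    have hkey : (l / d) * j = (j / d) * l := by
      obtain ⟨j', hj'⟩ := hdj
      obtain ⟨l', hl'⟩ := hdl
      rw [hj', hl', Int.mul_ediv_cancel_left _ hd0, Int.mul_ediv_cancel_left _ hd0]
      ring
    set φ : Fin 4 → FreeGroup (Fin 2) :=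
      ![1, A ^ (l / d), S * A ^ (j / d) * S⁻¹, S] with hφ
    have h : ∀ r ∈ rels5 i j k l, FreeGroup.lift φ r = 1 := by
      intro r hr
      simp only [rels5, Set.mem_insert_iff, Set.mem_singleton_iff] at hr
      rcases hr with rfl | rfl | rfl
      · simp [x5, y5, φ]
      · simp only [map_mul, map_inv, FreeGroup.lift_apply_of, x5, b5, φ]
        simp only [Matrix.cons_val_zero, Matrix.cons_val_two, Matrix.tail_cons,
          Matrix.head_cons]
        group
      · simp only [map_mul, map_inv, map_zpow, FreeGroup.lift_apply_of, x5, y5, b5, t5, φ]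
        simp only [Matrix.cons_val_zero, Matrix.cons_val_one, Matrix.head_cons,
          Matrix.cons_val_two, Matrix.tail_cons, Matrix.cons_val_three]
        rw [conj_zpow, ← zpow_mul, ← zpow_mul, hkey]
        group
    refine ⟨PresentedGroup.toGroup h, ?_⟩
    have hSrange : S ∈ (PresentedGroup.toGroup h).range :=
      ⟨PresentedGroup.of 3, by simp [PresentedGroup.toGroup.of, φ]⟩
    have h1 : A ^ (l / d) ∈ (PresentedGroup.toGroup h).range :=
      ⟨PresentedGroup.of 1, by simp [PresentedGroup.toGroup.of, φ]⟩
    have h2 : A ^ (j / d) ∈ (PresentedGroup.toGroup h).range := by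
      have hb : S * A ^ (j / d) * S⁻¹ ∈ (PresentedGroup.toGroup h).range :=
        ⟨PresentedGroup.of 2, by simp [PresentedGroup.toGroup.of, φ]⟩
      have := mul_mem (mul_mem (inv_mem hSrange) hb) hSrange
      simpa [mul_assoc] using this
    refine key _ ?_ hSrange
    have hgcd : Int.gcd (j / d) (l / d) = 1 := by
      have : 0 < Int.gcd j l := Nat.pos_of_ne_zero hd
      simpa [hdd] using Int.gcd_div_gcd_div_gcd this
    have hbez : (1 : ℤ) = (j / d) * Int.gcdA (j / d) (l / d)
        + (l / d) * Int.gcdB (j / d) (l / d) := by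
      rw [← Int.gcd_eq_gcd_ab, hgcd]; norm_num
    have : A = (A ^ (j / d)) ^ Int.gcdA (j / d) (l / d)
        * (A ^ (l / d)) ^ Int.gcdB (j / d) (l / d) := by
      rw [← zpow_mul, ← zpow_mul, ← zpow_add, ← hbez, zpow_one]
    rw [this]
    exact mul_mem (zpow_mem h2 _) (zpow_mem h1 _)
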